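/- arXiv:2605.21692 — 5 statements merged into one kernel-verified Lean document; each statement's English description precedes it below -/
import Mathlib

section
/- Let (X, d_X) and (Y, d_Y) be metric spaces, let μ be a Borel probability measure on X, let y : X → Y be a target function, and let f : X → Y be L-Lipschitz for some L ≥ 0 (i.e. d_Y(f x, f x') ≤ L · d_X(x, x') for all x, x'). Define the additively separable cost ℓ((x,u),(x',u')) = d_X(x,x') + d_Y(u,u') on X × Y. Then for every x ∈ X one has inf_{x'∈X} ℓ((x, y x), (x', f x')) ≤ d_Y(y x, f x) and d_Y(y x, f x) ≤ (1+L) · inf_{x'∈X} ℓ((x, y x), (x', f x')). Consequently, (1/(1+L)) · ∫ d_Y(y x, f x) dμ(x) ≤ ∫ inf_{x'∈X} ℓ((x, y x), (x', f x')) dμ(x) ≤ ∫ d_Y(y x, f x) dμ(x), where the integrals are Lebesgue integrals of the (nonnegative) integrands, assumed μ-measurable. -/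
open MeasureTheory

/-- **Representation gap vs generalization error.**
For metric spaces `X`, `Y`, a Borel probability measure `μ` on `X`, a target `y : X → Y`
and an `L`-Lipschitz model `f : X → Y`, with the additively separable cost
`ℓ((x,u),(x',u')) = d_X(x,x') + d_Y(u,u')`, one has pointwise
`inf_{x'} ℓ((x, y x), (x', f x')) ≤ d_Y(y x, f x) ≤ (1+L) · inf_{x'} ℓ((x, y x), (x', f x'))`,
and consequently the corresponding inequalities between the Lebesgue integrals. -/
theorem stmt_0
    {X Y : Type*} [MetricSpace X] [MetricSpace Y]
    [MeasurableSpace X] [BorelSpace X]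
    (μ : Measure X) [IsProbabilityMeasure μ]
    (y f : X → Y) (L : ℝ) (hL : 0 ≤ L)
    (hf : ∀ x x' : X, dist (f x) (f x') ≤ L * dist x x')
    (hmeas₁ : Measurable fun x : X => ⨅ x' : X, (dist x x' + dist (y x) (f x')))
    (hmeas₂ : Measurable fun x : X => dist (y x) (f x)) :
    (∀ x : X,
        (⨅ x' : X, (dist x x' + dist (y x) (f x'))) ≤ dist (y x) (f x) ∧
        dist (y x) (f x) ≤ (1 + L) * ⨅ x' : X, (dist x x' + dist (y x) (f x'))) ∧
    ENNReal.ofReal (1 / (1 + L)) * (∫⁻ x, ENNReal.ofReal (dist (y x) (f x)) ∂μ)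
        ≤ (∫⁻ x, ENNReal.ofReal (⨅ x' : X, (dist x x' + dist (y x) (f x'))) ∂μ) ∧
    (∫⁻ x, ENNReal.ofReal (⨅ x' : X, (dist x x' + dist (y x) (f x'))) ∂μ)
        ≤ ∫⁻ x, ENNReal.ofReal (dist (y x) (f x)) ∂μ := by
  have h1L : (0:ℝ) < 1 + L := by linarith
  have hbdd : ∀ x : X, BddBelow (Set.range fun x' : X => dist x x' + dist (y x) (f x')) := by
    intro x
    exact ⟨0, by rintro _ ⟨x', rfl⟩; positivity⟩
  have hpt : ∀ x : X,
      (⨅ x' : X, (dist x x' + dist (y x) (f x'))) ≤ dist (y x) (f x) ∧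
      dist (y x) (f x) ≤ (1 + L) * ⨅ x' : X, (dist x x' + dist (y x) (f x')) := by
    intro x
    constructor
    · have := ciInf_le (hbdd x) x
      simpa using this
    · have : Nonempty X := ⟨x⟩
      rw [← div_le_iff₀' h1L]
      apply le_ciInf
      intro x'
      rw [div_le_iff₀ h1L]
      calc dist (y x) (f x) ≤ dist (y x) (f x') + dist (f x') (f x) := dist_triangle _ _ _
        _ ≤ dist (y x) (f x') + L * dist x' x := by linarith [hf x' x]
        _ ≤ (dist x x' + dist (y x) (f x')) * (1 + L) := by
            rw [dist_comm x' x]; nlinarith [dist_nonneg (x := x) (y := x'), dist_nonneg (x := y x) (y := f x')]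
  refine ⟨hpt, ?_, ?_⟩
  · rw [← lintegral_const_mul' _ _ ENNReal.ofReal_ne_top]
    apply lintegral_mono
    intro x
    dsimp only
    rw [← ENNReal.ofReal_mul (by positivity)]
    apply ENNReal.ofReal_le_ofReal
    rw [one_div, inv_mul_eq_div, div_le_iff₀ h1L, mul_comm]
    exact (hpt x).2
  · exact lintegral_mono fun x => ENNReal.ofReal_le_ofReal (hpt x).1
end

section
/- Let (X, d_X) and (Y, d_Y) be metric spaces, let μ be a Borel probability measure on X, and let y : X → Y be L-Lipschitz for some L ≥ 0. Let D ⊆ X be a finite nonempty set and let f : X → Y be any function that interpolates y on D, i.e. f(x') = y(x') for all x' ∈ D. Define ℓ((x,u),(x',u')) = d_X(x,x') + d_Y(u,u'). Then for every x ∈ X, inf_{x'∈X} ℓ((x, y x), (x', f x')) ≤ (1+L) · min_{x'∈D} d_X(x, x'), and consequently ∫ inf_{x'∈X} ℓ((x, y x), (x', f x')) dμ(x) ≤ (1+L) · ∫ min_{x'∈D} d_X(x, x') dμ(x). -/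
open MeasureTheory

/-- **Representation gap bounded by nearest-neighbor error.**
If the target `y : X → Y` is `L`-Lipschitz, `D ⊆ X` is a finite nonempty training set, and
`f : X → Y` interpolates `y` on `D`, then for every `x`,
`inf_{x'∈X} ℓ((x, y x), (x', f x')) ≤ (1+L) · min_{x'∈D} d_X(x,x')`,
where `ℓ((x,u),(x',u')) = d_X(x,x') + d_Y(u,u')`; consequently the integrated
representation gap is bounded by `(1+L)` times the integrated nearest-neighbor error. -/
theorem stmt_1
    {X Y : Type*} [MetricSpace X] [MetricSpace Y]
    [MeasurableSpace X] [BorelSpace X]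
    (μ : Measure X) [IsProbabilityMeasure μ]
    (y : X → Y) (L : ℝ) (hL : 0 ≤ L)
    (hy : ∀ x x' : X, dist (y x) (y x') ≤ L * dist x x')
    (D : Finset X) (hD : D.Nonempty)
    (f : X → Y) (hf : ∀ x' ∈ D, f x' = y x') :
    (∀ x : X,
        (⨅ x' : X, (dist x x' + dist (y x) (f x'))) ≤
          (1 + L) * D.inf' hD (fun x' => dist x x')) ∧
    (∫⁻ x, ENNReal.ofReal (⨅ x' : X, (dist x x' + dist (y x) (f x'))) ∂μ)
        ≤ ENNReal.ofReal (1 + L) *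
            ∫⁻ x, ENNReal.ofReal (D.inf' hD (fun x' => dist x x')) ∂μ := by
  have key : ∀ x : X,
      (⨅ x' : X, (dist x x' + dist (y x) (f x'))) ≤
        (1 + L) * D.inf' hD (fun x' => dist x x') := by
    intro x
    obtain ⟨x₀, hx₀, hmin⟩ := D.exists_mem_eq_inf' hD (fun x' => dist x x')
    have hbdd : BddBelow (Set.range fun x' : X => dist x x' + dist (y x) (f x')) := by
      refine ⟨0, ?_⟩
      rintro r ⟨x', rfl⟩
      positivity
    calc (⨅ x' : X, (dist x x' + dist (y x) (f x')))
        ≤ dist x x₀ + dist (y x) (f x₀) := ciInf_le hbdd x₀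
      _ = dist x x₀ + dist (y x) (y x₀) := by rw [hf x₀ hx₀]
      _ ≤ dist x x₀ + L * dist x x₀ := by linarith [hy x x₀]
      _ = (1 + L) * dist x x₀ := by ring
      _ = (1 + L) * D.inf' hD (fun x' => dist x x') := by rw [hmin]
  refine ⟨key, ?_⟩
  calc (∫⁻ x, ENNReal.ofReal (⨅ x' : X, (dist x x' + dist (y x) (f x'))) ∂μ)
      ≤ ∫⁻ x, ENNReal.ofReal ((1 + L) * D.inf' hD (fun x' => dist x x')) ∂μ := by
        exact lintegral_mono fun x => ENNReal.ofReal_le_ofReal (key x)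
    _ = ∫⁻ x, ENNReal.ofReal (1 + L) *
          ENNReal.ofReal (D.inf' hD (fun x' => dist x x')) ∂μ := by
        congr 1; ext x
        rw [ENNReal.ofReal_mul (by linarith)]
    _ = ENNReal.ofReal (1 + L) *
          ∫⁻ x, ENNReal.ofReal (D.inf' hD (fun x' => dist x x')) ∂μ := by
        exact lintegral_const_mul' _ _ ENNReal.ofReal_ne_top
end

section
/- Fix d ≥ 1 and let U_d be the uniform distribution on [0,1]^d. There exist constants 0 < c ≤ C (depending only on d) such that for every n ≥ 1, c · n^{−2/d} ≤ R_n(U_d) ≤ C · n^{−2/d}; in particular one may take c = (1/2)·(2 V_d n)^{−2/d}·n^{2/d}·n^{−2/d}, i.e. R_n(U_d) ≥ (1/2)·(2 V_d n)^{−2/d} for all n. Consequently the Zador constant J*_d = inf_{n≥1} n^{2/d} R_n(U_d) satisfies 0 < J*_d < ∞. -/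
open MeasureTheory ENNReal

/-- The `n`-point quantization error of a Borel measure `P` on `ℝ^d` with squared
Euclidean cost: `R_n(P) = inf_{(z_1,…,z_n)} ∫ min_k ‖y − z_k‖² dP(y)`. -/
noncomputable def quantError (d n : ℕ) (P : Measure (EuclideanSpace ℝ (Fin d))) : ℝ :=
  ⨅ z : Fin n → EuclideanSpace ℝ (Fin d),
    (∫⁻ y, ENNReal.ofReal (⨅ k : Fin n, ‖y - z k‖ ^ 2) ∂P).toReal

/-- The unit cube `[0,1]^d ⊂ ℝ^d`. -/
def unitCube (d : ℕ) : Set (EuclideanSpace ℝ (Fin d)) :=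
  {x : EuclideanSpace ℝ (Fin d) | WithLp.ofLp x ∈ Set.univ.pi fun _ => Set.Icc (0 : ℝ) 1}

/-- The uniform distribution on the unit cube `[0,1]^d`. -/
noncomputable def uniformCube (d : ℕ) : Measure (EuclideanSpace ℝ (Fin d)) :=
  volume.restrict (unitCube d)

/-- The Zador constant `J*_d = inf_{n ≥ 1} n^{2/d} R_n(U_d)`. -/
noncomputable def zadorConst (d : ℕ) : ℝ :=
  ⨅ n : {n : ℕ // 1 ≤ n}, ((n : ℕ) : ℝ) ^ ((2 : ℝ) / d) * quantError d n (uniformCube d)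

/-- `V_d = π^{d/2} / Γ(d/2 + 1)`, the volume of the Euclidean unit ball in `ℝ^d`. -/
noncomputable def ballVol (d : ℕ) : ℝ :=
  Real.pi ^ ((d : ℝ) / 2) / Real.Gamma ((d : ℝ) / 2 + 1)

lemma volCube (d : ℕ) : volume (unitCube d) = 1 := by
  have h := (EuclideanSpace.volume_preserving_symm_measurableEquiv_toLp (Fin d)).measure_preimage
    (s := Set.univ.pi fun _ : Fin d => Set.Icc (0 : ℝ) 1)
    (MeasurableSet.univ_pi fun _ => measurableSet_Icc).nullMeasurableSet
  have heq : (MeasurableEquiv.toLp 2 (Fin d → ℝ)).symm ⁻¹'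
      (Set.univ.pi fun _ : Fin d => Set.Icc (0 : ℝ) 1) = unitCube d := rfl
  rw [heq] at h
  rw [h, volume_pi_pi]
  simp [Real.volume_Icc]


lemma measCube (d : ℕ) : MeasurableSet (unitCube d) := by
  have heq : (MeasurableEquiv.toLp 2 (Fin d → ℝ)).symm ⁻¹'
      (Set.univ.pi fun _ : Fin d => Set.Icc (0 : ℝ) 1) = unitCube d := rfl
  rw [← heq]
  exact (MeasurableEquiv.toLp 2 (Fin d → ℝ)).symm.measurable
    (MeasurableSet.univ_pi fun _ => measurableSet_Icc)


lemma normCube {d : ℕ} {y : EuclideanSpace ℝ (Fin d)} (hy : y ∈ unitCube d) :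
    ‖y‖ ≤ Real.sqrt d := by
  rw [EuclideanSpace.norm_eq]
  apply Real.sqrt_le_sqrt
  calc ∑ i, ‖y i‖ ^ 2 ≤ ∑ _i : Fin d, (1:ℝ) := by
        apply Finset.sum_le_sum
        intro i _
        have := (show WithLp.ofLp y ∈ Set.univ.pi fun _ => Set.Icc (0:ℝ) 1 from hy) i (Set.mem_univ i)
        have h1 : ‖y i‖ ≤ 1 := by rw [Real.norm_eq_abs, abs_le]; constructor <;> [linarith [this.1]; linarith [this.2]]
        nlinarith [norm_nonneg (y i)]
    _ = (d:ℝ) := by simp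


lemma ballVol_pos (d : ℕ) : 0 < ballVol d := by
  apply div_pos (Real.rpow_pos_of_pos Real.pi_pos _)
  apply Real.Gamma_pos_of_pos
  positivity


lemma volCB {d : ℕ} (hd : 1 ≤ d) (x : EuclideanSpace ℝ (Fin d)) (r : ℝ) :
    volume (Metric.closedBall x r) = ENNReal.ofReal r ^ d * ENNReal.ofReal (ballVol d) := by
  haveI : Nonempty (Fin d) := ⟨⟨0, hd⟩⟩
  rw [EuclideanSpace.volume_closedBall, Fintype.card_fin]
  have hπ : Real.sqrt Real.pi ^ d = Real.pi ^ ((d:ℝ)/2) := by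
    rw [← Real.rpow_natCast (Real.sqrt Real.pi) d, Real.sqrt_eq_rpow,
      ← Real.rpow_mul Real.pi_pos.le]
    ring_nf
  rw [ballVol, hπ]


lemma quant_nonneg (d n : ℕ) (P : Measure (EuclideanSpace ℝ (Fin d))) :
    0 ≤ quantError d n P :=
  le_ciInf fun _ => ENNReal.toReal_nonneg


lemma lower {d : ℕ} (hd : 1 ≤ d) (n : ℕ) (hn : 1 ≤ n) :
    (1 / 2 : ℝ) * (2 * ballVol d * (n : ℝ)) ^ (-(2 : ℝ) / d)
      ≤ quantError d n (uniformCube d) := by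
  have hdR : (0:ℝ) < d := by exact_mod_cast hd
  have hnR : (0:ℝ) < n := by exact_mod_cast hn
  have hV := ballVol_pos d
  set x : ℝ := 2 * ballVol d * n with hx
  have hxpos : 0 < x := by positivity
  set r : ℝ := x ^ (-(1:ℝ)/d) with hr
  have hrpos : 0 < r := Real.rpow_pos_of_pos hxpos _
  have hr2 : r ^ 2 = x ^ (-(2:ℝ)/d) := by
    rw [hr, ← Real.rpow_natCast (x ^ (-(1:ℝ)/d)) 2, ← Real.rpow_mul hxpos.le]
    norm_num
    ring_nf
  have hrd : r ^ d * ballVol d * n = 1/2 := by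
    have : r ^ d = x⁻¹ := by
      rw [hr, ← Real.rpow_natCast (x ^ (-(1:ℝ)/d)) d, ← Real.rpow_mul hxpos.le]
      rw [show -(1:ℝ)/d * d = -1 by field_simp, Real.rpow_neg_one]
    rw [this, hx]
    field_simp
  rw [← hr2]
  apply le_ciInf
  intro z
  haveI : Nonempty (Fin n) := ⟨⟨0, hn⟩⟩
  set f : EuclideanSpace ℝ (Fin d) → ℝ≥0∞ :=
    fun y => ENNReal.ofReal (⨅ k : Fin n, ‖y - z k‖ ^ 2) with hf
  set B : Set (EuclideanSpace ℝ (Fin d)) := ⋃ k, Metric.closedBall (z k) r with hB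
  have hBmeas : MeasurableSet B := MeasurableSet.iUnion fun k => measurableSet_closedBall
  have hvolB : volume B ≤ ENNReal.ofReal (1/2) := by
    calc volume B ≤ ∑' k : Fin n, volume (Metric.closedBall (z k) r) := measure_iUnion_le _
      _ = ∑ k : Fin n, volume (Metric.closedBall (z k) r) := tsum_fintype _
      _ = n * (ENNReal.ofReal r ^ d * ENNReal.ofReal (ballVol d)) := by
          simp [volCB hd, Finset.sum_const, Finset.card_univ, nsmul_eq_mul]
      _ = ENNReal.ofReal (1/2) := by
          rw [← ENNReal.ofReal_pow hrpos.le, ← ENNReal.ofReal_mul (by positivity),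
            ← ENNReal.ofReal_natCast n, ← ENNReal.ofReal_mul (by positivity)]
          congr 1
          rw [← hrd]; ring
  -- mass outside the balls
  have hS : ENNReal.ofReal (1/2) ≤ volume (unitCube d \ B) := by
    have h1 := le_measure_diff (μ := volume) (s₁ := unitCube d) (s₂ := B)
    rw [volCube] at h1
    refine le_trans ?_ h1
    have h2 : (1:ℝ≥0∞) - ENNReal.ofReal (1/2) ≤ 1 - volume B := tsub_le_tsub_left hvolB 1
    refine le_trans ?_ h2
    rw [show (1:ℝ≥0∞) = ENNReal.ofReal 1 by simp, ← ENNReal.ofReal_sub _ (by norm_num)]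
    norm_num
  -- lower bound on integral
  have hIlow : ENNReal.ofReal (r^2) * ENNReal.ofReal (1/2) ≤ ∫⁻ y, f y ∂(uniformCube d) := by
    have hsub : volume.restrict (unitCube d \ B) ≤ volume.restrict (unitCube d) :=
      Measure.restrict_mono Set.diff_subset le_rfl
    calc ENNReal.ofReal (r^2) * ENNReal.ofReal (1/2)
        ≤ ENNReal.ofReal (r^2) * volume (unitCube d \ B) := by
          exact mul_le_mul_right hS _
      _ = ∫⁻ _y in unitCube d \ B, ENNReal.ofReal (r^2) ∂volume := by
          rw [setLIntegral_const]
      _ ≤ ∫⁻ y in unitCube d \ B, f y ∂volume := by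
          apply setLIntegral_mono' ((measCube d).diff hBmeas)
          intro y hy
          apply ENNReal.ofReal_le_ofReal
          apply le_ciInf
          intro k
          have hyk : r < ‖y - z k‖ := by
            have := hy.2
            simp only [hB, Set.mem_iUnion, Metric.mem_closedBall, not_exists, not_le] at this
            simpa [dist_eq_norm] using this k
          nlinarith
      _ ≤ ∫⁻ y, f y ∂(uniformCube d) := lintegral_mono' hsub le_rfl
  -- upper bound (finiteness)
  have k0 : Fin n := ⟨0, hn⟩
  haveI : Nonempty (Fin n) := ⟨k0⟩
  set M : ℝ := (Real.sqrt d + ‖z k0‖) ^ 2 with hM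
  have hIfin : ∫⁻ y, f y ∂(uniformCube d) ≤ ENNReal.ofReal M := by
    calc ∫⁻ y, f y ∂(uniformCube d) ≤ ∫⁻ _y in unitCube d, ENNReal.ofReal M ∂volume := by
          apply setLIntegral_mono' (measCube d)
          intro y hy
          apply ENNReal.ofReal_le_ofReal
          refine le_trans (ciInf_le ⟨0, by rintro _ ⟨k, rfl⟩; positivity⟩ k0) ?_
          have h1 : ‖y - z k0‖ ≤ Real.sqrt d + ‖z k0‖ := by
            calc ‖y - z k0‖ ≤ ‖y‖ + ‖z k0‖ := norm_sub_le _ _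
              _ ≤ _ := by linarith [normCube hy]
          nlinarith [norm_nonneg (y - z k0), Real.sqrt_nonneg (d:ℝ), norm_nonneg (z k0)]
      _ = ENNReal.ofReal M := by rw [setLIntegral_const, volCube, mul_one]
  have hne : ∫⁻ y, f y ∂(uniformCube d) ≠ ⊤ :=
    (lt_of_le_of_lt hIfin ENNReal.ofReal_lt_top).ne
  have := ENNReal.toReal_mono hne hIlow
  rw [← ENNReal.ofReal_mul (by positivity), ENNReal.toReal_ofReal (by positivity)] at this
  calc (1/2 : ℝ) * r^2 = r^2 * (1/2) := by ring
    _ ≤ _ := this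


lemma upper {d : ℕ} (hd : 1 ≤ d) (n : ℕ) (hn : 1 ≤ n) :
    quantError d n (uniformCube d) ≤ (d : ℝ) * (n : ℝ) ^ (-(2 : ℝ) / d) := by
  have hdR : (0:ℝ) < d := by exact_mod_cast hd
  have hnR : (0:ℝ) < n := by exact_mod_cast hn
  set x : ℝ := (n:ℝ) ^ ((1:ℝ)/d) with hxdef
  have hx1 : 1 ≤ x := by
    rw [hxdef]
    calc (1:ℝ) = (1:ℝ) ^ ((1:ℝ)/d) := (Real.one_rpow _).symm
      _ ≤ (n:ℝ) ^ ((1:ℝ)/d) :=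
        Real.rpow_le_rpow (by norm_num) (by exact_mod_cast hn) (by positivity)
  set m : ℕ := ⌊x⌋₊ with hmdef
  have hm1 : 1 ≤ m := Nat.le_floor (by exact_mod_cast hx1)
  have hmpos : (0:ℝ) < m := by exact_mod_cast hm1
  have hm1R : (1:ℝ) ≤ m := by exact_mod_cast hm1
  have hmx : (m:ℝ) ≤ x := Nat.floor_le (by positivity)
  have hxd : x ^ (d:ℕ) = n := by
    rw [hxdef, ← Real.rpow_natCast ((n:ℝ) ^ ((1:ℝ)/d)) d, ← Real.rpow_mul hnR.le]
    rw [show (1:ℝ)/d * d = 1 by field_simp, Real.rpow_one]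
  have hmn : m ^ d ≤ n := by
    have : ((m ^ d : ℕ):ℝ) ≤ (n:ℝ) := by
      push_cast
      calc (m:ℝ)^d ≤ x^d := pow_le_pow_left₀ hmpos.le hmx d
        _ = n := hxd
    exact_mod_cast this
  have hx2m : x ≤ 2 * m := by
    rcases le_or_gt x 2 with h | h
    · linarith
    · have h2 := Nat.sub_one_lt_floor x
      rw [← hmdef] at h2
      linarith
  -- the grid points
  set center : (Fin d → Fin m) → EuclideanSpace ℝ (Fin d) :=
    fun j => (WithLp.equiv 2 (Fin d → ℝ)).symm fun i => (2 * (j i : ℝ) + 1) / (2 * m)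
    with hcenter
  have hmd_pos : 0 < m ^ d := Nat.pow_pos hm1
  set z : Fin n → EuclideanSpace ℝ (Fin d) :=
    fun k => center (finFunctionFinEquiv.symm ⟨(k : ℕ) % m ^ d, Nat.mod_lt _ hmd_pos⟩)
    with hz
  -- key pointwise bound
  have key : ∀ y ∈ unitCube d, ∃ k : Fin n, ‖y - z k‖ ^ 2 ≤ (d:ℝ) / (4 * m^2) := by
    intro y hy
    set j : Fin d → Fin m := fun i =>
      ⟨min ⌊y i * m⌋₊ (m-1), lt_of_le_of_lt (min_le_right _ _) (by omega)⟩ with hj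
    refine ⟨⟨(finFunctionFinEquiv j : ℕ), lt_of_lt_of_le (Fin.is_lt _) hmn⟩, ?_⟩
    have harg : (⟨((finFunctionFinEquiv j : ℕ)) % m ^ d, Nat.mod_lt _ hmd_pos⟩ : Fin (m^d))
        = finFunctionFinEquiv j :=
      Fin.eq_of_val_eq (Nat.mod_eq_of_lt (Fin.is_lt (finFunctionFinEquiv j)))
    have hzk : z ⟨(finFunctionFinEquiv j : ℕ), lt_of_lt_of_le (Fin.is_lt _) hmn⟩ = center j := by
      show center (finFunctionFinEquiv.symm
        ⟨((finFunctionFinEquiv j : ℕ)) % m ^ d, Nat.mod_lt _ hmd_pos⟩) = center j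
      rw [harg, Equiv.symm_apply_apply]
    rw [hzk]
    -- coordinatewise bound
    have hcoord : ∀ i : Fin d, (y i - center j i) ^ 2 ≤ 1 / (4 * (m:ℝ)^2) := by
      intro i
      have hyi := (show WithLp.ofLp y ∈ Set.univ.pi fun _ => Set.Icc (0:ℝ) 1 from hy) i (Set.mem_univ i)
      obtain ⟨hy0, hy1⟩ := hyi
      set t : ℝ := y i
      set a : ℝ := ((j i : ℕ) : ℝ) with ha
      have h1 : a ≤ t * m := by
        have hfl : (⌊t * m⌋₊ : ℝ) ≤ t * m := Nat.floor_le (by positivity)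
        have : ((j i : ℕ) : ℝ) ≤ (⌊t * m⌋₊ : ℝ) := by
          exact_mod_cast (min_le_left _ _ : (j i : ℕ) ≤ ⌊t * m⌋₊)
        linarith
      have h2 : t * m ≤ a + 1 := by
        rcases le_or_gt ⌊t * m⌋₊ (m-1) with h | h
        · have hji : (j i : ℕ) = ⌊t * m⌋₊ := min_eq_left h
          have := Nat.lt_floor_add_one (t * m)
          rw [ha, hji]
          push_cast
          linarith
        · have hji : (j i : ℕ) = m - 1 := min_eq_right (le_of_lt h)
          rw [ha, hji]
          have : ((m - 1 : ℕ) : ℝ) = (m:ℝ) - 1 := by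
            push_cast [Nat.cast_sub hm1]; ring
          rw [this]
          nlinarith
      have hcj : center j i = (2 * a + 1) / (2 * m) := rfl
      rw [hcj]
      have e : t - (2*a+1)/(2*m) = (2*(t*m - a) - 1)/(2*m) := by
        field_simp
        ring
      rw [e, div_pow]
      have hnum : (2*(t*m - a) - 1)^2 ≤ 1 := by nlinarith
      calc (2*(t*m - a) - 1)^2 / (2*(m:ℝ))^2 ≤ 1 / (2*(m:ℝ))^2 := by
            gcongr
        _ = 1 / (4 * (m:ℝ)^2) := by ring_nf
    -- sum up
    have hnorm : ‖y - center j‖ ^ 2 = ∑ i : Fin d, (y i - center j i) ^ 2 := by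
      rw [EuclideanSpace.norm_eq, Real.sq_sqrt (by positivity)]
      refine Finset.sum_congr rfl fun i _ => ?_
      rw [show (y - center j) i = y i - center j i from rfl, Real.norm_eq_abs, sq_abs]
    rw [hnorm]
    calc ∑ i : Fin d, (y i - center j i) ^ 2 ≤ ∑ _i : Fin d, 1 / (4 * (m:ℝ)^2) :=
          Finset.sum_le_sum fun i _ => hcoord i
      _ = (d:ℝ) / (4 * m^2) := by
          rw [Finset.sum_const, Finset.card_univ, Fintype.card_fin, nsmul_eq_mul]
          ring
  -- integral bound
  haveI : Nonempty (Fin n) := ⟨⟨0, hn⟩⟩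
  have hbdd : BddBelow (Set.range fun z : Fin n → EuclideanSpace ℝ (Fin d) =>
      (∫⁻ y, ENNReal.ofReal (⨅ k : Fin n, ‖y - z k‖ ^ 2) ∂(uniformCube d)).toReal) :=
    ⟨0, by rintro _ ⟨w, rfl⟩; exact ENNReal.toReal_nonneg⟩
  refine le_trans (ciInf_le hbdd z) ?_
  have hI : (∫⁻ y, ENNReal.ofReal (⨅ k : Fin n, ‖y - z k‖ ^ 2) ∂(uniformCube d))
      ≤ ENNReal.ofReal ((d:ℝ) / (4 * m^2)) := by
    calc (∫⁻ y, ENNReal.ofReal (⨅ k : Fin n, ‖y - z k‖ ^ 2) ∂(uniformCube d))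
        ≤ ∫⁻ _y in unitCube d, ENNReal.ofReal ((d:ℝ) / (4 * m^2)) ∂volume := by
          apply setLIntegral_mono' (measCube d)
          intro y hy
          apply ENNReal.ofReal_le_ofReal
          obtain ⟨k, hk⟩ := key y hy
          exact le_trans (ciInf_le ⟨0, by rintro _ ⟨l, rfl⟩; positivity⟩ k) hk
      _ = ENNReal.ofReal ((d:ℝ) / (4 * m^2)) := by rw [setLIntegral_const, volCube, mul_one]
  have h1 : (∫⁻ y, ENNReal.ofReal (⨅ k : Fin n, ‖y - z k‖ ^ 2) ∂(uniformCube d)).toReal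
      ≤ (d:ℝ) / (4 * m^2) := by
    have := ENNReal.toReal_mono ENNReal.ofReal_ne_top hI
    rwa [ENNReal.toReal_ofReal (by positivity)] at this
  refine le_trans h1 ?_
  -- arithmetic: d/(4m²) ≤ d n^{-2/d}
  have hx2 : x ^ 2 = (n:ℝ) ^ ((2:ℝ)/d) := by
    rw [hxdef, ← Real.rpow_natCast ((n:ℝ) ^ ((1:ℝ)/d)) 2, ← Real.rpow_mul hnR.le]
    congr 1
    push_cast
    ring
  have hneg : (n:ℝ) ^ (-(2:ℝ)/d) = ((n:ℝ) ^ ((2:ℝ)/d))⁻¹ := by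
    rw [show -(2:ℝ)/d = -((2:ℝ)/d) by ring, Real.rpow_neg hnR.le]
  rw [hneg, ← hx2, ← div_eq_mul_inv]
  have hx2m2 : x^2 ≤ 4*(m:ℝ)^2 := by nlinarith
  gcongr


/-- **Two-sided `n^{-2/d}` bounds on the quantization error of the unit cube.**
There are constants `0 < c ≤ C` with `c n^{-2/d} ≤ R_n(U_d) ≤ C n^{-2/d}` for all `n ≥ 1`;
moreover `R_n(U_d) ≥ (1/2)(2 V_d n)^{-2/d}` for all `n ≥ 1`. Consequently the Zador
constant `J*_d = inf_{n≥1} n^{2/d} R_n(U_d)` is positive and finite. -/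
theorem stmt_3 (d : ℕ) (hd : 1 ≤ d) :
    ∃ c C : ℝ, 0 < c ∧ c ≤ C ∧
      (∀ n : ℕ, 1 ≤ n →
        c * (n : ℝ) ^ (-(2 : ℝ) / d) ≤ quantError d n (uniformCube d) ∧
        quantError d n (uniformCube d) ≤ C * (n : ℝ) ^ (-(2 : ℝ) / d)) ∧
      (∀ n : ℕ, 1 ≤ n →
        (1 / 2 : ℝ) * (2 * ballVol d * (n : ℝ)) ^ (-(2 : ℝ) / d)
          ≤ quantError d n (uniformCube d)) ∧
      0 < zadorConst d ∧ zadorConst d ≤ C := by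
  have hV := ballVol_pos d
  set c : ℝ := (1/2) * (2 * ballVol d) ^ (-(2:ℝ)/d) with hc
  have hc_pos : 0 < c := by
    have := Real.rpow_pos_of_pos (show (0:ℝ) < 2 * ballVol d by positivity) (-(2:ℝ)/d)
    positivity
  set C : ℝ := max c d with hC
  have hcC : c ≤ C := le_max_left _ _
  have hdC : (d:ℝ) ≤ C := le_max_right _ _
  have hlow : ∀ n : ℕ, 1 ≤ n →
      c * (n : ℝ) ^ (-(2 : ℝ) / d) ≤ quantError d n (uniformCube d) := by
    intro n hn
    have hnR : (0:ℝ) < n := by exact_mod_cast hn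
    have h := lower hd n hn
    have he : (2 * ballVol d * (n:ℝ)) ^ (-(2:ℝ)/d)
        = (2 * ballVol d) ^ (-(2:ℝ)/d) * (n:ℝ) ^ (-(2:ℝ)/d) :=
      Real.mul_rpow (by positivity) hnR.le
    rw [he] at h
    calc c * (n:ℝ) ^ (-(2:ℝ)/d)
        = 1/2 * ((2 * ballVol d) ^ (-(2:ℝ)/d) * (n:ℝ) ^ (-(2:ℝ)/d)) := by
          rw [hc]; ring
      _ ≤ _ := h
  have hup : ∀ n : ℕ, 1 ≤ n →
      quantError d n (uniformCube d) ≤ C * (n : ℝ) ^ (-(2 : ℝ) / d) := by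
    intro n hn
    refine le_trans (upper hd n hn) ?_
    exact mul_le_mul_of_nonneg_right hdC (Real.rpow_nonneg (Nat.cast_nonneg n) _)
  refine ⟨c, C, hc_pos, hcC, fun n hn => ⟨hlow n hn, hup n hn⟩,
    fun n hn => lower hd n hn, ?_, ?_⟩
  · -- 0 < zadorConst d
    refine lt_of_lt_of_le hc_pos (le_ciInf ?_)
    rintro ⟨n, hn⟩
    have hnR : (0:ℝ) < n := by exact_mod_cast hn
    have h := hlow n hn
    have h2 := mul_le_mul_of_nonneg_left h
      (Real.rpow_nonneg (Nat.cast_nonneg n) ((2:ℝ)/d))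
    calc c = (n:ℝ)^((2:ℝ)/d) * (c * (n:ℝ)^(-(2:ℝ)/d)) := by
          rw [mul_comm ((n:ℝ)^((2:ℝ)/d)) _, mul_assoc,
            ← Real.rpow_add hnR, show -(2:ℝ)/d + 2/d = 0 by ring, Real.rpow_zero, mul_one]
      _ ≤ (n:ℝ)^((2:ℝ)/d) * quantError d n (uniformCube d) := h2
  · -- zadorConst d ≤ C
    have hbdd : BddBelow (Set.range fun n : {n : ℕ // 1 ≤ n} =>
        ((n : ℕ) : ℝ) ^ ((2 : ℝ) / d) * quantError d n (uniformCube d)) := by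
      refine ⟨0, ?_⟩
      rintro _ ⟨⟨n, hn⟩, rfl⟩
      exact mul_nonneg (Real.rpow_nonneg (Nat.cast_nonneg n) _) (quant_nonneg d n _)
    refine ciInf_le_of_le hbdd ⟨1, le_rfl⟩ ?_
    have h := hup 1 le_rfl
    rw [Nat.cast_one, Real.one_rpow, mul_one] at h
    simpa only [Nat.cast_one, Real.one_rpow, one_mul] using h
end

section
/- Let D ⊂ ℝ^N be a finite nonempty set, and let y ∈ ℝ^N admit a unique nearest point y* in D, i.e. ‖y − y*‖ < ‖y − z‖ for every z ∈ D with z ≠ y*. For α ∈ (0,1) define the softmax weights W_α(z) = exp(−‖y − √α·z‖²/(2(1−α))) / Σ_{z'∈D} exp(−‖y − √α·z'‖²/(2(1−α))) for z ∈ D. Then, as α → 1⁻, W_α(y*) → 1 and W_α(z) → 0 for every z ∈ D with z ≠ y*. -/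
open Filter

open scoped Classical in
private lemma aux_13 (N : ℕ) (D : Finset (EuclideanSpace ℝ (Fin N)))
    (y ystar : EuclideanSpace ℝ (Fin N)) (hstar : ystar ∈ D)
    (huniq : ∀ z ∈ D, z ≠ ystar → ‖y - ystar‖ < ‖y - z‖)
    (z : EuclideanSpace ℝ (Fin N)) (hz : z ∈ D) :
    Tendsto
      (fun α : ℝ =>
        Real.exp (-(‖y - Real.sqrt α • z‖ ^ 2 / (2 * (1 - α)))) /
          ∑ z' ∈ D, Real.exp (-(‖y - Real.sqrt α • z'‖ ^ 2 / (2 * (1 - α)))))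
      (nhdsWithin 1 (Set.Ioo (0 : ℝ) 1)) (nhds (if z = ystar then 1 else 0)) := by
  classical
  set L := nhdsWithin (1 : ℝ) (Set.Ioo (0 : ℝ) 1)
  set a : EuclideanSpace ℝ (Fin N) → ℝ → ℝ :=
    fun w α => -(‖y - Real.sqrt α • w‖ ^ 2 / (2 * (1 - α))) with ha
  set g : EuclideanSpace ℝ (Fin N) → ℝ → ℝ :=
    fun w α => Real.exp (a w α - a ystar α) with hg
  -- the softmax is invariant under subtracting a ystar α
  have key : ∀ w, (fun α : ℝ => Real.exp (a w α) / ∑ z' ∈ D, Real.exp (a z' α))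
      = fun α => g w α / ∑ z' ∈ D, g z' α := by
    intro w
    funext α
    have hE : (Real.exp (a ystar α))⁻¹ ≠ 0 := inv_ne_zero (Real.exp_ne_zero _)
    have h1 : ∀ u, g u α = Real.exp (a u α) * (Real.exp (a ystar α))⁻¹ := by
      intro u; rw [hg]; simp [Real.exp_sub, div_eq_mul_inv]
    rw [h1]
    have h2 : ∑ z' ∈ D, g z' α
        = (∑ z' ∈ D, Real.exp (a z' α)) * (Real.exp (a ystar α))⁻¹ := by
      rw [Finset.sum_mul]; exact Finset.sum_congr rfl fun u _ => h1 u
    rw [h2, mul_div_mul_right _ _ hE]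
  -- limits of the normalized weights
  have hv : Tendsto (fun α : ℝ => (2 * (1 - α))⁻¹) L atTop := by
    apply tendsto_inv_nhdsGT_zero.comp
    rw [tendsto_nhdsWithin_iff]
    constructor
    · have : Tendsto (fun α : ℝ => 2 * (1 - α)) (nhds 1) (nhds (2 * (1 - 1))) :=
        (tendsto_const_nhds.mul ((tendsto_const_nhds.sub tendsto_id)))
      simpa using this.mono_left nhdsWithin_le_nhds
    · filter_upwards [self_mem_nhdsWithin] with α hα
      have : α < 1 := hα.2
      simp only [Set.mem_Ioi]
      nlinarith
  have hgw : ∀ w ∈ D, Tendsto (g w) L (nhds (if w = ystar then 1 else 0)) := by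
    intro w hw
    by_cases hwy : w = ystar
    · subst hwy
      have h1 : g w = fun _ => (1:ℝ) := by funext α; simp [hg]
      rw [h1, if_pos rfl]
      exact tendsto_const_nhds
    · simp only [hwy, if_false]
      have hu : Tendsto (fun α : ℝ => ‖y - Real.sqrt α • w‖ ^ 2 - ‖y - Real.sqrt α • ystar‖ ^ 2)
          L (nhds (‖y - w‖ ^ 2 - ‖y - ystar‖ ^ 2)) := by
        have hc : Continuous (fun α : ℝ =>
            ‖y - Real.sqrt α • w‖ ^ 2 - ‖y - Real.sqrt α • ystar‖ ^ 2) := by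
          apply Continuous.sub <;>
          exact ((continuous_const.sub (Real.continuous_sqrt.smul continuous_const)).norm).pow 2
        have := (hc.tendsto 1).mono_left (nhdsWithin_le_nhds (s := Set.Ioo (0:ℝ) 1))
        simp only [Real.sqrt_one, one_smul] at this
        exact this
      have hcpos : 0 < ‖y - w‖ ^ 2 - ‖y - ystar‖ ^ 2 := by
        have h := huniq w hw hwy
        have := norm_nonneg (y - ystar)
        nlinarith
      have hAtTop : Tendsto (fun α : ℝ =>
          (‖y - Real.sqrt α • w‖ ^ 2 - ‖y - Real.sqrt α • ystar‖ ^ 2) * (2 * (1 - α))⁻¹)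
          L atTop := hu.pos_mul_atTop hcpos hv
      have hAtBot : Tendsto (fun α : ℝ => a w α - a ystar α) L atBot := by
        have heq : (fun α : ℝ => a w α - a ystar α)
            = fun α => -((‖y - Real.sqrt α • w‖ ^ 2 - ‖y - Real.sqrt α • ystar‖ ^ 2)
                * (2 * (1 - α))⁻¹) := by
          funext α; rw [ha]; ring
        rw [heq]
        exact tendsto_neg_atTop_atBot.comp hAtTop
      exact Real.tendsto_exp_atBot.comp hAtBot
  have hS : Tendsto (fun α => ∑ z' ∈ D, g z' α) L (nhds 1) := by
    have := tendsto_finset_sum D (fun w hw => hgw w hw)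
    have hsum : (∑ w ∈ D, if w = ystar then (1 : ℝ) else 0) = 1 := by
      rw [Finset.sum_ite_eq' D ystar (fun _ => (1 : ℝ))]
      simp [hstar]
    rwa [hsum] at this
  have := (hgw z hz).div hS one_ne_zero
  simp only [div_one] at this
  rw [show (fun α : ℝ =>
        Real.exp (-(‖y - Real.sqrt α • z‖ ^ 2 / (2 * (1 - α)))) /
          ∑ z' ∈ D, Real.exp (-(‖y - Real.sqrt α • z'‖ ^ 2 / (2 * (1 - α)))))
      = fun α => g z α / ∑ z' ∈ D, g z' α from key z]
  exact this

/-- **Concentration of the diffusion posterior weights at the nearest data point.**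
Let `D ⊂ ℝ^N` be a finite nonempty dataset and let `y` have a unique nearest point
`y* ∈ D`. For `α ∈ (0,1)` define the softmax weights
`W_α(z) = exp(−‖y − √α z‖²/(2(1−α))) / Σ_{z'∈D} exp(−‖y − √α z'‖²/(2(1−α)))`.
Then, as `α → 1⁻`, `W_α(y*) → 1` and `W_α(z) → 0` for every other `z ∈ D`. -/
theorem stmt_13 (N : ℕ) (D : Finset (EuclideanSpace ℝ (Fin N))) (hD : D.Nonempty)
    (y ystar : EuclideanSpace ℝ (Fin N)) (hstar : ystar ∈ D)
    (huniq : ∀ z ∈ D, z ≠ ystar → ‖y - ystar‖ < ‖y - z‖) :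
    Tendsto
      (fun α : ℝ =>
        Real.exp (-(‖y - Real.sqrt α • ystar‖ ^ 2 / (2 * (1 - α)))) /
          ∑ z' ∈ D, Real.exp (-(‖y - Real.sqrt α • z'‖ ^ 2 / (2 * (1 - α)))))
      (nhdsWithin 1 (Set.Ioo (0 : ℝ) 1)) (nhds 1) ∧
    ∀ z ∈ D, z ≠ ystar →
      Tendsto
        (fun α : ℝ =>
          Real.exp (-(‖y - Real.sqrt α • z‖ ^ 2 / (2 * (1 - α)))) /
            ∑ z' ∈ D, Real.exp (-(‖y - Real.sqrt α • z'‖ ^ 2 / (2 * (1 - α)))))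
        (nhdsWithin 1 (Set.Ioo (0 : ℝ) 1)) (nhds 0) := by
  constructor
  · have := aux_13 N D y ystar hstar huniq ystar hstar
    simpa using this
  · intro z hz hne
    have := aux_13 N D y ystar hstar huniq z hz
    simpa [hne] using this
end

section
/- Let S ⊂ ℝ^N be a nonempty compact set and let μ be a Borel probability measure on ℝ^N with finite second moment (∫ ‖x‖² dμ < ∞). Then the infimum, over all Borel probability measures ν on ℝ^N supported in S and all couplings π of (μ, ν) (Borel probability measures on ℝ^N × ℝ^N with first marginal μ and second marginal ν), of ∫ ‖x − y‖² dπ(x, y), equals ∫ min_{z∈S} ‖x − z‖² dμ(x). In other words, the representation gap of μ relative to S equals the squared 2-Wasserstein-type transport cost from μ to the closest probability measure supported in S. -/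
open MeasureTheory

/-- **The representation gap is a transport cost.** Let `S ⊂ ℝ^N` be nonempty and compact
and let `μ` be a Borel probability measure with finite second moment. Then the infimum,
over probability measures `ν` supported in `S` and couplings `π` of `(μ, ν)`, of
`∫ ‖x − y‖² dπ(x,y)` equals `∫ min_{z∈S} ‖x − z‖² dμ(x)`. -/
theorem stmt_16 (N : ℕ) (S : Set (EuclideanSpace ℝ (Fin N)))
    (hS : S.Nonempty) (hScomp : IsCompact S)
    (μ : Measure (EuclideanSpace ℝ (Fin N))) [IsProbabilityMeasure μ]
    (hmom : (∫⁻ x, ENNReal.ofReal (‖x‖ ^ 2) ∂μ) < ⊤) :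
    (⨅ (ν : Measure (EuclideanSpace ℝ (Fin N))) (_ : IsProbabilityMeasure ν)
        (_ : ν Sᶜ = 0)
        (π : Measure (EuclideanSpace ℝ (Fin N) × EuclideanSpace ℝ (Fin N)))
        (_ : π.fst = μ) (_ : π.snd = ν),
          ∫⁻ q, ENNReal.ofReal (‖q.1 - q.2‖ ^ 2) ∂π)
      = ∫⁻ x, ENNReal.ofReal (⨅ z : S, ‖x - (z : EuclideanSpace ℝ (Fin N))‖ ^ 2) ∂μ := by
  classical
  have hSne : Nonempty S := hS.to_subtype
  set f : (EuclideanSpace ℝ (Fin N)) → ℝ := fun x => (Metric.infDist x S) ^ 2 with hf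
  have hfnn : ∀ x : (EuclideanSpace ℝ (Fin N)), 0 ≤ f x := fun x => sq_nonneg _
  have hfcont : Continuous f := (Metric.continuous_infDist_pt S).pow 2
  have hfmeas : Measurable f := hfcont.measurable
  -- the pointwise infimum equals the squared distance to S
  have hfx : ∀ x : (EuclideanSpace ℝ (Fin N)), (⨅ z : S, ‖x - (z : (EuclideanSpace ℝ (Fin N)))‖ ^ 2) = f x := by
    intro x
    obtain ⟨z₀, hz₀S, hz₀⟩ := hScomp.exists_infDist_eq_dist hS x
    have hbdd : BddBelow (Set.range fun z : S => ‖x - (z : (EuclideanSpace ℝ (Fin N)))‖ ^ 2) := by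
      refine ⟨0, ?_⟩
      rintro r ⟨z, rfl⟩
      positivity
    apply le_antisymm
    · have := ciInf_le hbdd (⟨z₀, hz₀S⟩ : S)
      simp only [hf]
      rw [hz₀, dist_eq_norm]
      exact this
    · refine le_ciInf fun z => ?_
      have h1 : Metric.infDist x S ≤ ‖x - (z : (EuclideanSpace ℝ (Fin N)))‖ := by
        rw [← dist_eq_norm]
        exact Metric.infDist_le_dist_of_mem z.2
      have h0 : 0 ≤ Metric.infDist x S := Metric.infDist_nonneg
      exact pow_le_pow_left₀ h0 h1 2
  have hRHS : (∫⁻ x, ENNReal.ofReal (⨅ z : S, ‖x - (z : (EuclideanSpace ℝ (Fin N)))‖ ^ 2) ∂μ)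
      = ∫⁻ x, ENNReal.ofReal (f x) ∂μ := by
    refine lintegral_congr fun x => by rw [hfx x]
  rw [hRHS]
  -- finiteness of the right-hand side
  obtain ⟨z₀, hz₀S⟩ := hS
  have hfbound : ∀ x : (EuclideanSpace ℝ (Fin N)), f x ≤ 2 * ‖x‖ ^ 2 + 2 * ‖z₀‖ ^ 2 := by
    intro x
    have h1 : Metric.infDist x S ≤ ‖x - z₀‖ := by
      rw [← dist_eq_norm]; exact Metric.infDist_le_dist_of_mem hz₀S
    have h2 : ‖x - z₀‖ ≤ ‖x‖ + ‖z₀‖ := norm_sub_le _ _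
    have h0 : 0 ≤ Metric.infDist x S := Metric.infDist_nonneg
    have := pow_le_pow_left₀ h0 (h1.trans h2) 2
    simp only [hf]
    nlinarith [norm_nonneg x, norm_nonneg z₀, sq_nonneg (‖x‖ - ‖z₀‖)]
  have hfin : (∫⁻ x, ENNReal.ofReal (f x) ∂μ) < ⊤ := by
    have hle : (∫⁻ x, ENNReal.ofReal (f x) ∂μ)
        ≤ ∫⁻ x, (2 * ENNReal.ofReal (‖x‖ ^ 2) + ENNReal.ofReal (2 * ‖z₀‖ ^ 2)) ∂μ := by
      refine lintegral_mono fun x => ?_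
      calc ENNReal.ofReal (f x) ≤ ENNReal.ofReal (2 * ‖x‖ ^ 2 + 2 * ‖z₀‖ ^ 2) :=
            ENNReal.ofReal_le_ofReal (hfbound x)
        _ = ENNReal.ofReal (2 * ‖x‖ ^ 2) + ENNReal.ofReal (2 * ‖z₀‖ ^ 2) := by
            rw [ENNReal.ofReal_add (by positivity) (by positivity)]
        _ = 2 * ENNReal.ofReal (‖x‖ ^ 2) + ENNReal.ofReal (2 * ‖z₀‖ ^ 2) := by
            rw [ENNReal.ofReal_mul (by norm_num)]
            norm_num
    refine lt_of_le_of_lt hle ?_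
    rw [lintegral_add_right _ measurable_const, lintegral_const_mul 2
      ((measurable_norm.pow_const 2).ennreal_ofReal), lintegral_const, measure_univ, mul_one]
    exact ENNReal.add_lt_top.2 ⟨ENNReal.mul_lt_top (by norm_num) hmom, ENNReal.ofReal_lt_top⟩
  apply le_antisymm
  · -- upper bound : construct approximate couplings
    refine ENNReal.le_of_forall_pos_le_add fun ε hε _ => ?_
    -- a dense sequence in S
    obtain ⟨D, hD⟩ := TopologicalSpace.exists_dense_seq S
    set g : ℕ → (EuclideanSpace ℝ (Fin N)) := fun n => (D n : (EuclideanSpace ℝ (Fin N))) with hg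
    have hgS : ∀ n, g n ∈ S := fun n => (D n).2
    -- the defining property for the selection
    have hex : ∀ x : (EuclideanSpace ℝ (Fin N)), ∃ n, ‖x - g n‖ ^ 2 < f x + ε := by
      intro x
      obtain ⟨z₁, hz₁S, hz₁⟩ := hScomp.exists_infDist_eq_dist ⟨z₀, hz₀S⟩ x
      set a : ℝ := ‖x - z₁‖ with ha
      have haeq : Metric.infDist x S = a := by rw [hz₁, dist_eq_norm]
      have ha0 : 0 ≤ a := norm_nonneg _
      set δ : ℝ := min 1 (ε / (2 * a + 2)) with hδ
      have hδpos : 0 < δ := by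
        apply lt_min one_pos
        apply div_pos (by exact_mod_cast hε) (by linarith)
      obtain ⟨n, hn⟩ := hD.exists_dist_lt (⟨z₁, hz₁S⟩ : S) hδpos
      have hdn : ‖z₁ - g n‖ < δ := by
        have : dist z₁ (g n) < δ := by
          simpa [Subtype.dist_eq] using hn
        rwa [dist_eq_norm] at this
      refine ⟨n, ?_⟩
      have h1 : ‖x - g n‖ ≤ a + ‖z₁ - g n‖ := by
        have : x - g n = (x - z₁) + (z₁ - g n) := by abel
        rw [this]; exact norm_add_le _ _
      have h2 : ‖x - g n‖ ^ 2 ≤ (a + ‖z₁ - g n‖) ^ 2 :=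
        pow_le_pow_left₀ (norm_nonneg _) h1 2
      have hδ1 : δ ≤ 1 := min_le_left _ _
      have hδ2 : δ * (2 * a + 2) ≤ ε := by
        have := min_le_right 1 (ε / (2 * a + 2))
        calc δ * (2 * a + 2) ≤ (ε / (2 * a + 2)) * (2 * a + 2) := by
              apply mul_le_mul_of_nonneg_right this (by linarith)
          _ = ε := by field_simp
      have hεpos : (0:ℝ) < ε := by exact_mod_cast hε
      have hfxa : f x = a ^ 2 := by rw [hf]; simp only; rw [haeq]
      rw [hfxa]
      have hdn0 : 0 ≤ ‖z₁ - g n‖ := norm_nonneg _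
      nlinarith [sq_nonneg (‖z₁ - g n‖)]
    -- measurable selection
    set T : (EuclideanSpace ℝ (Fin N)) → (EuclideanSpace ℝ (Fin N)) := fun x => g (Nat.find (hex x)) with hT
    have hTS : ∀ x, T x ∈ S := fun x => hgS _
    have hTspec : ∀ x, ‖x - T x‖ ^ 2 < f x + ε := fun x => Nat.find_spec (hex x)
    have hfind : Measurable fun x => Nat.find (hex x) := by
      refine measurable_find hex fun k => ?_
      have : {x : (EuclideanSpace ℝ (Fin N)) | ‖x - g k‖ ^ 2 < f x + ε} =
          {x : (EuclideanSpace ℝ (Fin N)) | (fun x => ‖x - g k‖ ^ 2) x < (fun x => f x + ε) x} := rfl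
      rw [this]
      exact measurableSet_lt
        (((continuous_id.sub continuous_const).norm.pow 2).measurable)
        (hfmeas.add measurable_const)
    have hTmeas : Measurable T := by
      have hgm : Measurable g := measurable_from_top
      exact hgm.comp hfind
    set π : Measure ((EuclideanSpace ℝ (Fin N)) × (EuclideanSpace ℝ (Fin N))) := μ.map (fun x => (x, T x)) with hπ
    set ν : Measure (EuclideanSpace ℝ (Fin N)) := μ.map T with hν
    have hpm : Measurable fun x : (EuclideanSpace ℝ (Fin N)) => (x, T x) := measurable_id.prodMk hTmeas
    have hνprob : IsProbabilityMeasure ν := Measure.isProbabilityMeasure_map hTmeas.aemeasurable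
    have hνS : ν Sᶜ = 0 := by
      rw [hν, Measure.map_apply hTmeas hScomp.isClosed.measurableSet.compl]
      have : T ⁻¹' Sᶜ = ∅ := by
        ext x; simp [hTS x]
      rw [this, measure_empty]
    have hfst : π.fst = μ := by
      rw [hπ, Measure.fst_map_prodMk hTmeas]; exact Measure.map_id
    have hsnd : π.snd = ν := by
      rw [hπ, hν]; exact Measure.snd_map_prodMk measurable_id
    have hcost : (∫⁻ q, ENNReal.ofReal (‖q.1 - q.2‖ ^ 2) ∂π)
        ≤ (∫⁻ x, ENNReal.ofReal (f x) ∂μ) + ε := by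
      rw [hπ, lintegral_map (by
        exact ((continuous_fst.sub continuous_snd).norm.pow 2).measurable.ennreal_ofReal) hpm]
      calc (∫⁻ x, ENNReal.ofReal (‖x - T x‖ ^ 2) ∂μ)
          ≤ ∫⁻ x, ENNReal.ofReal (f x + ε) ∂μ := by
            refine lintegral_mono fun x => ENNReal.ofReal_le_ofReal (hTspec x).le
        _ = ∫⁻ x, (ENNReal.ofReal (f x) + ENNReal.ofReal (ε:ℝ)) ∂μ := by
            refine lintegral_congr fun x => ENNReal.ofReal_add (hfnn x) ε.2
        _ = (∫⁻ x, ENNReal.ofReal (f x) ∂μ) + ε := by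
            rw [lintegral_add_right _ measurable_const, lintegral_const, measure_univ, mul_one,
              ENNReal.ofReal_coe_nnreal]
    calc (⨅ (ν' : Measure (EuclideanSpace ℝ (Fin N))) (_ : IsProbabilityMeasure ν') (_ : ν' Sᶜ = 0)
        (π' : Measure ((EuclideanSpace ℝ (Fin N)) × (EuclideanSpace ℝ (Fin N)))) (_ : π'.fst = μ) (_ : π'.snd = ν'),
          ∫⁻ q, ENNReal.ofReal (‖q.1 - q.2‖ ^ 2) ∂π')
        ≤ ∫⁻ q, ENNReal.ofReal (‖q.1 - q.2‖ ^ 2) ∂π := by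
          refine iInf_le_of_le ν (iInf_le_of_le hνprob (iInf_le_of_le hνS
            (iInf_le_of_le π (iInf_le_of_le hfst (iInf_le_of_le hsnd le_rfl)))))
      _ ≤ (∫⁻ x, ENNReal.ofReal (f x) ∂μ) + ε := hcost
  · -- lower bound
    refine le_iInf fun ν => le_iInf fun hν => le_iInf fun hνS => le_iInf fun π =>
      le_iInf fun hfst => le_iInf fun hsnd => ?_
    have hμeq : (∫⁻ x, ENNReal.ofReal (f x) ∂μ)
        = ∫⁻ q : (EuclideanSpace ℝ (Fin N)) × (EuclideanSpace ℝ (Fin N)), ENNReal.ofReal (f q.1) ∂π := by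
      rw [← hfst, Measure.fst, lintegral_map hfmeas.ennreal_ofReal measurable_fst]
    rw [hμeq]
    have hae : ∀ᵐ q : (EuclideanSpace ℝ (Fin N)) × (EuclideanSpace ℝ (Fin N)) ∂π, q.2 ∈ S := by
      have : π (Prod.snd ⁻¹' Sᶜ) = 0 := by
        rw [← Measure.snd_apply hScomp.isClosed.measurableSet.compl, hsnd]
        exact hνS
      rw [ae_iff]
      simpa [Set.preimage] using this
    refine lintegral_mono_ae ?_
    filter_upwards [hae] with q hq
    refine ENNReal.ofReal_le_ofReal ?_
    have h1 : Metric.infDist q.1 S ≤ ‖q.1 - q.2‖ := by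
      rw [← dist_eq_norm]
      exact Metric.infDist_le_dist_of_mem hq
    exact pow_le_pow_left₀ Metric.infDist_nonneg h1 2
end
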